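/- Let (X,d) be a compact metric space and T : X → 2^X upper semi-continuous, open, and expanding. For every α ∈ (0,1] and every α-Hölder function f : X → ℝ, there exists an α-Hölder function v : X → ℝ such that f(x) + v(x) − v(y) ≤ β(f) for all (x,y) ∈ gr(T), where β(f) = sup_{μ ∈ M_T} ∫ f dμ (with sup ∅ = −∞, and the inequality interpreted trivially if M_T = ∅). -/

import Mathlib

open MeasureTheory Metric
open scoped ENNReal


private lemma mane_branch {X : Type*} [MetricSpace X] [CompactSpace X] (T : X → Set X)
    (hT : IsClosed {p : X × X | p.2 ∈ T p.1})
    (hopen : ∀ A : Set X, IsOpen A → IsOpen {y : X | ∃ x ∈ A, y ∈ T x})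
    {lam η : ℝ} (hη : 0 < η)
    (hexp : ∀ x y : X, dist x y ≤ η → ∀ x' ∈ T x, ∀ y' ∈ T y, lam * dist x y ≤ dist x' y') :
    ∃ δ > 0, ∀ x y y', y ∈ T x → dist y y' ≤ δ →
      ∃ x', y' ∈ T x' ∧ dist x x' ≤ η ∧ lam * dist x x' ≤ dist y y' := by
  classical
  set G : Set (X × X) := {p : X × X | p.2 ∈ T p.1} with hG
  have hGc : IsCompact G := hT.isCompact
  have hr : ∀ p : {q : X × X // q ∈ G}, ∃ r > 0,
      ball (p.1.2) r ⊆ {y | ∃ x ∈ ball p.1.1 (η/2), y ∈ T x} := by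
    rintro ⟨⟨a, b⟩, hab⟩
    have hW : IsOpen {y | ∃ x ∈ ball a (η/2), y ∈ T x} := hopen _ isOpen_ball
    have hbW : b ∈ {y | ∃ x ∈ ball a (η/2), y ∈ T x} :=
      ⟨a, mem_ball_self (by linarith), hab⟩
    rcases Metric.isOpen_iff.1 hW b hbW with ⟨r, hr0, hrsub⟩
    exact ⟨r, hr0, hrsub⟩
  choose R hR0 hRsub using hr
  set U : {q : X × X // q ∈ G} → Set (X × X) :=
    fun p => ball p.1.1 (η/2) ×ˢ ball p.1.2 (R p / 2) with hU
  have hUopen : ∀ p, IsOpen (U p) := fun p => isOpen_ball.prod isOpen_ball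
  have hcov : G ⊆ ⋃ p, U p := by
    intro q hq
    exact Set.mem_iUnion.2 ⟨⟨q, hq⟩, by
      constructor
      · exact mem_ball_self (by linarith)
      · exact mem_ball_self (by simpa using half_pos (hR0 ⟨q, hq⟩))⟩
  rcases hGc.elim_finite_subcover U hUopen hcov with ⟨t, ht⟩
  by_cases htn : t.Nonempty
  · refine ⟨t.inf' htn (fun p => R p / 2), ?_, ?_⟩
    · exact (Finset.lt_inf'_iff htn).2 fun p _ => half_pos (hR0 p)
    · intro x y y' hyx hd
      have hxy : (x, y) ∈ G := hyx
      rcases Set.mem_iUnion₂.1 (ht hxy) with ⟨p, hpt, hpU⟩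
      obtain ⟨hx1, hy2⟩ := hpU
      have hδle : t.inf' htn (fun p => R p / 2) ≤ R p / 2 := Finset.inf'_le _ hpt
      have hy' : y' ∈ ball p.1.2 (R p) := by
        have := dist_triangle y' y p.1.2
        simp only [mem_ball] at hy2 ⊢
        have : dist y' y ≤ R p / 2 := le_trans (by rw [dist_comm]; exact hd) hδle
        calc dist y' p.1.2 ≤ dist y' y + dist y p.1.2 := dist_triangle _ _ _
          _ < R p / 2 + R p / 2 := by exact add_lt_add_of_le_of_lt this hy2
          _ = R p := by ring
      rcases hRsub p hy' with ⟨x', hx', hy'Tx'⟩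
      have hxx' : dist x x' ≤ η := by
        have h1 : dist x p.1.1 < η/2 := mem_ball.1 hx1
        have h2 : dist p.1.1 x' < η/2 := by rw [dist_comm]; exact mem_ball.1 hx'
        calc dist x x' ≤ dist x p.1.1 + dist p.1.1 x' := dist_triangle _ _ _
          _ ≤ η := by linarith
      exact ⟨x', hy'Tx', hxx', hexp x x' hxx' y hyx y' hy'Tx'⟩
  · refine ⟨1, one_pos, ?_⟩
    intro x y y' hyx _
    exfalso
    have : (x, y) ∈ ⋃ p ∈ t, U p := ht hyx
    rcases Set.mem_iUnion₂.1 this with ⟨p, hpt, _⟩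
    exact htn ⟨p, hpt⟩

private def MChain {X : Type*} (T : X → Set X) (n : ℕ) (c : ℕ → X) : Prop :=
  ∀ k < n, c k ∈ T (c (k+1))

private lemma mane_transport {X : Type*} [MetricSpace X] (T : X → Set X)
    {lam δ : ℝ} (hlam : 1 < lam) (hδ : 0 < δ)
    (hB : ∀ x y y', y ∈ T x → dist y y' ≤ δ → ∃ x', y' ∈ T x' ∧ lam * dist x x' ≤ dist y y')
    (n : ℕ) (c : ℕ → X) (hc : MChain T n c) (y' : X) (hd : dist (c 0) y' ≤ δ) :
    ∃ c', c' 0 = y' ∧ MChain T n c' ∧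
      ∀ k ≤ n, dist (c k) (c' k) ≤ lam⁻¹ ^ k * dist (c 0) y' := by
  have hlam0 : (0:ℝ) < lam := by linarith
  have hinv1 : lam⁻¹ ≤ 1 := inv_le_one_of_one_le₀ hlam.le
  have hinv0 : (0:ℝ) ≤ lam⁻¹ := inv_nonneg.2 hlam0.le
  induction n with
  | zero =>
      refine ⟨fun _ => y', rfl, fun k hk => absurd hk (Nat.not_lt_zero k), ?_⟩
      intro k hk
      interval_cases k
      simpa using hd
  | succ n IH =>
      have hcn : MChain T n c := fun k hk => hc k (hk.trans (Nat.lt_succ_self n))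
      obtain ⟨c', hc'0, hc'ch, hc'd⟩ := IH hcn
      have h1 : c n ∈ T (c (n+1)) := hc n (Nat.lt_succ_self n)
      have hdist : dist (c n) (c' n) ≤ lam⁻¹ ^ n * dist (c 0) y' := hc'd n le_rfl
      have hpow1 : lam⁻¹ ^ n ≤ 1 := pow_le_one₀ hinv0 hinv1
      have hle : lam⁻¹ ^ n * dist (c 0) y' ≤ δ := by
        nlinarith [dist_nonneg (x := c 0) (y := y')]
      obtain ⟨x', hx'T, hx'd⟩ := hB (c (n+1)) (c n) (c' n) h1 (le_trans hdist hle)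
      refine ⟨fun k => if k = n+1 then x' else c' k, by simp [hc'0], ?_, ?_⟩
      · intro k hk
        by_cases hkn : k = n
        · subst hkn
          simp only [if_pos rfl, if_neg (by omega : k ≠ k+1)]
          exact hx'T
        · have hk' : k < n := by omega
          simp only [if_neg (by omega : k ≠ n+1), if_neg (by omega : k+1 ≠ n+1)]
          exact hc'ch k hk'
      · intro k hk
        by_cases hkn1 : k = n+1
        · subst hkn1
          simp only [if_pos rfl]
          have : dist (c (n+1)) x' ≤ lam⁻¹ * dist (c n) (c' n) := by
            rw [← mul_le_mul_iff_right₀ hlam0]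
            calc lam * dist (c (n+1)) x' ≤ dist (c n) (c' n) := hx'd
              _ = lam * (lam⁻¹ * dist (c n) (c' n)) := by
                  field_simp
          calc dist (c (n+1)) x' ≤ lam⁻¹ * dist (c n) (c' n) := this
            _ ≤ lam⁻¹ * (lam⁻¹ ^ n * dist (c 0) y') := by
                exact mul_le_mul_of_nonneg_left hdist hinv0
            _ = lam⁻¹ ^ (n+1) * dist (c 0) y' := by ring
        · simp only [if_neg hkn1]
          exact hc'd k (by omega)

private lemma mane_geom {Q : ℝ} (hQ0 : 0 ≤ Q) (hQ1 : Q < 1) (n : ℕ) :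
    ∑ k ∈ Finset.range n, Q ^ (k+1) ≤ Q / (1 - Q) := by
  have h1Q : 0 < 1 - Q := by linarith
  have h1 : ∑ k ∈ Finset.range n, Q ^ k ≤ 1 / (1 - Q) := by
    rw [geom_sum_eq (by linarith : Q ≠ 1) n]
    have heq : (Q ^ n - 1)/(Q - 1) = (1 - Q ^ n)/(1 - Q) := by
      rw [← neg_div_neg_eq]; ring_nf
    rw [heq]
    gcongr
    nlinarith [pow_nonneg hQ0 n]
  calc ∑ k ∈ Finset.range n, Q ^ (k+1) = Q * ∑ k ∈ Finset.range n, Q ^ k := by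
        rw [Finset.mul_sum]; exact Finset.sum_congr rfl fun k _ => by ring
    _ ≤ Q * (1 / (1 - Q)) := mul_le_mul_of_nonneg_left h1 hQ0
    _ = Q / (1 - Q) := by ring

private lemma mane_val_diff {X : Type*} [MetricSpace X] {lam α K β : ℝ}
    (hlam : 1 < lam) (hα : 0 < α) (hK : 0 < K) (f : X → ℝ)
    (hf : ∀ x y, |f x - f y| ≤ K * dist x y ^ α)
    (n : ℕ) (c c' : ℕ → X) (D : ℝ) (hD : 0 ≤ D)
    (hd : ∀ k ≤ n, dist (c k) (c' k) ≤ lam⁻¹ ^ k * D) :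
    ∑ k ∈ Finset.range n, (f (c (k+1)) - β) ≤
      ∑ k ∈ Finset.range n, (f (c' (k+1)) - β) +
        K * (lam⁻¹ ^ α) / (1 - lam⁻¹ ^ α) * D ^ α := by
  have hlam0 : (0:ℝ) < lam := by linarith
  have hinv0 : (0:ℝ) ≤ lam⁻¹ := inv_nonneg.2 hlam0.le
  have hinv1 : lam⁻¹ < 1 := inv_lt_one_of_one_lt₀ hlam
  set Q : ℝ := lam⁻¹ ^ α with hQdef
  have hQ0 : 0 ≤ Q := Real.rpow_nonneg hinv0 α
  have hQ1 : Q < 1 := Real.rpow_lt_one hinv0 hinv1 hα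
  have hpow : ∀ m : ℕ, ((lam⁻¹ : ℝ) ^ m) ^ α = Q ^ m := by
    intro m
    rw [← Real.rpow_natCast lam⁻¹ m, ← Real.rpow_natCast Q m, hQdef,
      ← Real.rpow_mul hinv0, ← Real.rpow_mul hinv0, mul_comm]
  have hterm : ∀ k ∈ Finset.range n,
      f (c (k+1)) - β ≤ (f (c' (k+1)) - β) + K * (Q ^ (k+1) * D ^ α) := by
    intro k hk
    have hkn : k + 1 ≤ n := Finset.mem_range.1 hk
    have h1 : |f (c (k+1)) - f (c' (k+1))| ≤ K * dist (c (k+1)) (c' (k+1)) ^ α := hf _ _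
    have h2 : dist (c (k+1)) (c' (k+1)) ^ α ≤ (lam⁻¹ ^ (k+1) * D) ^ α :=
      Real.rpow_le_rpow dist_nonneg (hd (k+1) hkn) hα.le
    have h3 : (lam⁻¹ ^ (k+1) * D) ^ α = Q ^ (k+1) * D ^ α := by
      rw [Real.mul_rpow (pow_nonneg hinv0 _) hD, hpow]
    have h4 := abs_le.1 h1
    nlinarith [h4.1, h4.2]
  calc ∑ k ∈ Finset.range n, (f (c (k+1)) - β)
      ≤ ∑ k ∈ Finset.range n, ((f (c' (k+1)) - β) + K * (Q ^ (k+1) * D ^ α)) :=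
        Finset.sum_le_sum hterm
    _ = ∑ k ∈ Finset.range n, (f (c' (k+1)) - β) +
        K * D ^ α * ∑ k ∈ Finset.range n, Q ^ (k+1) := by
        rw [Finset.sum_add_distrib, Finset.mul_sum]
        congr 1
        exact Finset.sum_congr rfl fun k _ => by ring
    _ ≤ ∑ k ∈ Finset.range n, (f (c' (k+1)) - β) + K * D ^ α * (Q / (1 - Q)) := by
        have hsum := mane_geom hQ0 hQ1 n
        have hKD : 0 ≤ K * D ^ α := mul_nonneg hK.le (Real.rpow_nonneg hD α)
        nlinarith
    _ = ∑ k ∈ Finset.range n, (f (c' (k+1)) - β) + K * Q / (1 - Q) * D ^ α := by ring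

private lemma nat_greatest {P : ℕ → Prop} (b : ℕ) (h0 : P 0) :
    ∃ j, j ≤ b ∧ P j ∧ ∀ k, j < k → k ≤ b → ¬ P k := by
  classical
  exact ⟨Nat.findGreatest P b, Nat.findGreatest_le _,
    Nat.findGreatest_spec (Nat.zero_le _) h0,
    fun k hk hkb => Nat.findGreatest_is_greatest hk hkb⟩

private lemma mane_pigeon {X : Type*} (g : X → ℝ) (G s₀ : ℝ)
    (hG : 0 ≤ G) (hs₀ : 0 ≤ s₀) (hgG : ∀ x, g x ≤ G) (idx : X → X) :
    ∀ n : ℕ, ∀ S : Finset X, ∀ z : ℕ → X,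
      (∀ r < n, idx (z r) ∈ S) →
      (∀ i L, 0 < L → i + L < n → idx (z i) = idx (z (i+L)) →
        ∑ r ∈ Finset.range L, g (z (i+r)) ≤ s₀) →
      ∑ r ∈ Finset.range n, g (z r) ≤ S.card * (G + s₀) := by
  intro n
  induction n using Nat.strong_induction_on with
  | _ n IH =>
    intro S z hmem hseg
    classical
    rcases Nat.eq_zero_or_pos n with h0 | hpos
    · subst h0
      simp only [Finset.range_zero, Finset.sum_empty]
      positivity
    · obtain ⟨j, hjle, hjP, hjmax⟩ :=
        nat_greatest (P := fun j => idx (z j) = idx (z 0)) (n-1) rfl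
      have hjn : j < n := by omega
      set m := n - (j + 1) with hmdef
      have hdec : ∑ r ∈ Finset.range n, g (z r)
          = (∑ r ∈ Finset.range j, g (z r)) + g (z j)
            + ∑ r ∈ Finset.range m, g (z (j + 1 + r)) := by
        have h1 : ∑ r ∈ Finset.Ico 0 n, g (z r)
            = ∑ r ∈ Finset.Ico 0 j, g (z r) + ∑ r ∈ Finset.Ico j n, g (z r) :=
          (Finset.sum_Ico_consecutive _ (Nat.zero_le j) hjn.le).symm
        have h2 : ∑ r ∈ Finset.Ico j n, g (z r)
            = g (z j) + ∑ r ∈ Finset.Ico (j+1) n, g (z r) :=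
          Finset.sum_eq_sum_Ico_succ_bot hjn _
        have h3 : ∑ r ∈ Finset.Ico (j+1) n, g (z r)
            = ∑ r ∈ Finset.range (n - (j+1)), g (z (j+1+r)) :=
          Finset.sum_Ico_eq_sum_range _ _ _
        have h4 : ∑ r ∈ Finset.Ico 0 j, g (z r) = ∑ r ∈ Finset.range j, g (z r) := by
          rw [Finset.range_eq_Ico]
        calc ∑ r ∈ Finset.range n, g (z r) = ∑ r ∈ Finset.Ico 0 n, g (z r) := by
              rw [Finset.range_eq_Ico]
          _ = ∑ r ∈ Finset.Ico 0 j, g (z r) + ∑ r ∈ Finset.Ico j n, g (z r) := h1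
          _ = ∑ r ∈ Finset.range j, g (z r)
              + (g (z j) + ∑ r ∈ Finset.range m, g (z (j+1+r))) := by
              rw [h2, h3, h4, hmdef]
          _ = _ := by ring
      have hbd1 : ∑ r ∈ Finset.range j, g (z r) ≤ s₀ := by
        rcases Nat.eq_zero_or_pos j with hj0 | hj0
        · simp [hj0, hs₀]
        · have h := hseg 0 j hj0 (by omega) (by simpa using hjP.symm)
          simpa using h
      have hbd2 : g (z j) ≤ G := hgG _
      have hmlt : m < n := by omega
      have hmem' : ∀ r < m, idx (z (j+1+r)) ∈ S.erase (idx (z 0)) := by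
        intro r hr
        refine Finset.mem_erase.2 ⟨?_, hmem (j+1+r) (by omega)⟩
        exact hjmax (j+1+r) (by omega) (by omega)
      have hseg' : ∀ i L, 0 < L → i + L < m → idx (z (j+1+i)) = idx (z (j+1+(i+L))) →
          ∑ r ∈ Finset.range L, g (z (j+1+(i+r))) ≤ s₀ := by
        intro i L hL hiL hidx
        have h := hseg (j+1+i) L hL (by omega)
          (by rw [show (j+1+i)+L = j+1+(i+L) by omega]; exact hidx)
        calc ∑ r ∈ Finset.range L, g (z (j+1+(i+r)))
            = ∑ r ∈ Finset.range L, g (z ((j+1+i)+r)) :=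
              Finset.sum_congr rfl fun r _ => by rw [show j+1+(i+r) = (j+1+i)+r by omega]
          _ ≤ s₀ := h
      have htail := IH m hmlt (S.erase (idx (z 0))) (fun r => z (j+1+r)) hmem' hseg'
      have h0S : idx (z 0) ∈ S := hmem 0 hpos
      have hcard : (S.erase (idx (z 0))).card + 1 = S.card := Finset.card_erase_add_one h0S
      have hcardR : ((S.erase (idx (z 0))).card : ℝ) = (S.card : ℝ) - 1 := by
        have : ((S.erase (idx (z 0))).card : ℝ) + 1 = (S.card : ℝ) := by
          exact_mod_cast congrArg (Nat.cast (R := ℝ)) hcard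
        linarith
      rw [hdec]
      rw [hcardR] at htail
      nlinarith [htail]

private lemma mane_closing {X : Type*} [MetricSpace X] [CompactSpace X] (T : X → Set X)
    {lam η δ₀ : ℝ} (hlam : 1 < lam) (hη : 0 < η) (hδ₀ : 0 < δ₀) (hδη : 2 * δ₀ ≤ η)
    (hexp : ∀ x y : X, dist x y ≤ η → ∀ x' ∈ T x, ∀ y' ∈ T y, lam * dist x y ≤ dist x' y')
    (hB : ∀ x y y', y ∈ T x → dist y y' ≤ δ₀ → ∃ x', y' ∈ T x' ∧ lam * dist x x' ≤ dist y y')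
    (L : ℕ) (hL : 1 ≤ L) (σ : ℕ → X) (hσ : MChain T L σ)
    (hgap : dist (σ 0) (σ L) ≤ δ₀ * (lam - 1) / lam) :
    ∃ π : ℕ → X, MChain T L π ∧ π L = π 0 ∧
      ∀ k ≤ L, dist (σ k) (π k) ≤ lam⁻¹ ^ k * δ₀ := by
  have hlam0 : (0:ℝ) < lam := by linarith
  have hinv0 : (0:ℝ) ≤ lam⁻¹ := inv_nonneg.2 hlam0.le
  have hinv1 : lam⁻¹ ≤ 1 := inv_le_one_of_one_le₀ hlam.le
  have hF : ∀ w, dist (σ 0) w ≤ δ₀ → ∃ c', c' 0 = w ∧ MChain T L c' ∧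
      ∀ k ≤ L, dist (σ k) (c' k) ≤ lam⁻¹ ^ k * dist (σ 0) w := by
    intro w hw
    exact mane_transport T hlam hδ₀ hB L σ hσ w hw
  choose! Fc hFc0 hFcch hFcd using hF
  set F : X → X := fun w => Fc w L with hFdef
  have hpowL : lam⁻¹ ^ L ≤ lam⁻¹ := by
    calc lam⁻¹ ^ L ≤ lam⁻¹ ^ 1 := pow_le_pow_of_le_one hinv0 hinv1 hL
      _ = lam⁻¹ := pow_one _
  have hmaps : ∀ w, dist (σ 0) w ≤ δ₀ → dist (σ 0) (F w) ≤ δ₀ := by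
    intro w hw
    have h1 : dist (σ L) (Fc w L) ≤ lam⁻¹ ^ L * dist (σ 0) w := hFcd w hw L le_rfl
    have h2 : lam⁻¹ ^ L * dist (σ 0) w ≤ lam⁻¹ * δ₀ := by
      have := dist_nonneg (x := σ 0) (y := w)
      have h3 : lam⁻¹ ^ L * dist (σ 0) w ≤ lam⁻¹ * dist (σ 0) w :=
        mul_le_mul_of_nonneg_right hpowL dist_nonneg
      have h4 : lam⁻¹ * dist (σ 0) w ≤ lam⁻¹ * δ₀ := mul_le_mul_of_nonneg_left hw hinv0
      linarith
    calc dist (σ 0) (F w) ≤ dist (σ 0) (σ L) + dist (σ L) (F w) := dist_triangle _ _ _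
      _ ≤ δ₀ * (lam - 1) / lam + lam⁻¹ * δ₀ := by
          refine add_le_add hgap (le_trans h1 h2)
      _ = δ₀ := by field_simp; ring
  have hcontr : ∀ w w', dist (σ 0) w ≤ δ₀ → dist (σ 0) w' ≤ δ₀ →
      ∀ k, k ≤ L → dist (Fc w k) (Fc w' k) ≤ lam⁻¹ ^ k * dist w w' := by
    intro w w' hw hw' k
    induction k with
    | zero => intro _; rw [hFc0 w hw, hFc0 w' hw']; simp
    | succ k IHk =>
        intro hkL
        have hkL' : k ≤ L := by omega
        have hkLlt : k < L := by omega
        have hd1 : dist (σ (k+1)) (Fc w (k+1)) ≤ lam⁻¹ ^ (k+1) * dist (σ 0) w :=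
          hFcd w hw (k+1) hkL
        have hd2 : dist (σ (k+1)) (Fc w' (k+1)) ≤ lam⁻¹ ^ (k+1) * dist (σ 0) w' :=
          hFcd w' hw' (k+1) hkL
        have hpk : lam⁻¹ ^ (k+1) ≤ 1 := pow_le_one₀ hinv0 hinv1
        have hclose : dist (Fc w (k+1)) (Fc w' (k+1)) ≤ η := by
          have t1 : lam⁻¹ ^ (k+1) * dist (σ 0) w ≤ δ₀ := by
            nlinarith [dist_nonneg (x := σ 0) (y := w)]
          have t2 : lam⁻¹ ^ (k+1) * dist (σ 0) w' ≤ δ₀ := by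
            nlinarith [dist_nonneg (x := σ 0) (y := w')]
          calc dist (Fc w (k+1)) (Fc w' (k+1))
              ≤ dist (Fc w (k+1)) (σ (k+1)) + dist (σ (k+1)) (Fc w' (k+1)) := dist_triangle _ _ _
            _ ≤ δ₀ + δ₀ := by rw [dist_comm (Fc w (k+1))]; exact add_le_add (le_trans hd1 t1) (le_trans hd2 t2)
            _ ≤ η := by linarith
        have hmem1 : Fc w k ∈ T (Fc w (k+1)) := hFcch w hw k hkLlt
        have hmem2 : Fc w' k ∈ T (Fc w' (k+1)) := hFcch w' hw' k hkLlt
        have hstep := hexp (Fc w (k+1)) (Fc w' (k+1)) hclose (Fc w k) hmem1 (Fc w' k) hmem2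
        have hIH := IHk hkL'
        calc dist (Fc w (k+1)) (Fc w' (k+1))
            ≤ lam⁻¹ * dist (Fc w k) (Fc w' k) := by
              rw [← mul_le_mul_iff_right₀ hlam0]
              calc lam * dist (Fc w (k+1)) (Fc w' (k+1)) ≤ dist (Fc w k) (Fc w' k) := hstep
                _ = lam * (lam⁻¹ * dist (Fc w k) (Fc w' k)) := by field_simp
          _ ≤ lam⁻¹ * (lam⁻¹ ^ k * dist w w') := mul_le_mul_of_nonneg_left hIH hinv0
          _ = lam⁻¹ ^ (k+1) * dist w w' := by ring
  have hFlip : ∀ w w', dist (σ 0) w ≤ δ₀ → dist (σ 0) w' ≤ δ₀ →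
      dist (F w) (F w') ≤ lam⁻¹ * dist w w' := by
    intro w w' hw hw'
    have := hcontr w w' hw hw' L le_rfl
    have h2 : lam⁻¹ ^ L * dist w w' ≤ lam⁻¹ * dist w w' :=
      mul_le_mul_of_nonneg_right hpowL dist_nonneg
    exact le_trans this h2
  -- iterate
  set w : ℕ → X := fun s => F^[s] (σ 0) with hwdef
  have hwD : ∀ s, dist (σ 0) (w s) ≤ δ₀ := by
    intro s
    induction s with
    | zero => simpa [hwdef] using hδ₀.le
    | succ s IHs =>
        have : w (s+1) = F (w s) := by
          simp only [hwdef, Function.iterate_succ_apply']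
        rw [this]
        exact hmaps _ IHs
  have hwsucc : ∀ s, w (s+1) = F (w s) := by
    intro s; simp only [hwdef, Function.iterate_succ_apply']
  have hgeo : ∀ s, dist (w s) (w (s+1)) ≤ δ₀ * lam⁻¹ ^ s := by
    intro s
    induction s with
    | zero =>
        simp only [pow_zero, mul_one]
        have := hwD 1
        calc dist (w 0) (w 1) = dist (σ 0) (w 1) := by rw [show w 0 = σ 0 from by simp [hwdef]]
          _ ≤ δ₀ := this
    | succ s IHs =>
        have h2 := hFlip (w s) (w (s+1)) (hwD s) (hwD (s+1))
        rw [← hwsucc s, ← hwsucc (s+1)] at h2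
        calc dist (w (s+1)) (w (s+1+1)) ≤ lam⁻¹ * dist (w s) (w (s+1)) := h2
          _ ≤ lam⁻¹ * (δ₀ * lam⁻¹ ^ s) := mul_le_mul_of_nonneg_left IHs hinv0
          _ = δ₀ * lam⁻¹ ^ (s+1) := by ring
  have hrlt : lam⁻¹ < 1 := inv_lt_one_of_one_lt₀ hlam
  have hcauchy : CauchySeq w := cauchySeq_of_le_geometric lam⁻¹ δ₀ hrlt hgeo
  obtain ⟨l, hl⟩ := cauchySeq_tendsto_of_complete hcauchy
  have hlD : dist (σ 0) l ≤ δ₀ := by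
    have hten : Filter.Tendsto (fun s => dist (σ 0) (w s)) Filter.atTop (nhds (dist (σ 0) l)) :=
      tendsto_const_nhds.dist hl
    exact le_of_tendsto hten (Filter.Eventually.of_forall hwD)
  have hFl : F l = l := by
    have h1 : Filter.Tendsto (fun s => dist (F l) (w (s+1))) Filter.atTop (nhds (dist (F l) l)) :=
      tendsto_const_nhds.dist (hl.comp (Filter.tendsto_add_atTop_nat 1))
    have h2 : ∀ s, dist (F l) (w (s+1)) ≤ lam⁻¹ * dist l (w s) := by
      intro s; rw [hwsucc s]; exact hFlip l (w s) hlD (hwD s)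
    have h3 : Filter.Tendsto (fun s => lam⁻¹ * dist l (w s)) Filter.atTop
        (nhds (lam⁻¹ * dist l l)) :=
      (tendsto_const_nhds.dist hl).const_mul _
    have h4 : dist (F l) l ≤ lam⁻¹ * dist l l := le_of_tendsto_of_tendsto' h1 h3 h2
    have h5 : dist (F l) l ≤ 0 := by simpa using h4
    have h6 : dist (F l) l = 0 := le_antisymm h5 dist_nonneg
    exact dist_eq_zero.1 h6
  refine ⟨Fc l, hFcch l hlD, ?_, ?_⟩
  · rw [show Fc l L = F l from rfl, hFl, hFc0 l hlD]
  · intro k hk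
    have h7 := hFcd l hlD k hk
    have h8 : lam⁻¹ ^ k * dist (σ 0) l ≤ lam⁻¹ ^ k * δ₀ :=
      mul_le_mul_of_nonneg_left hlD (pow_nonneg hinv0 k)
    linarith

private lemma mane_shift_sum {M : Type*} [AddCommMonoid M] (L : ℕ) (hL : 1 ≤ L) (h : ℕ → M) :
    ∑ k ∈ Finset.range L, h ((k+1) % L) = ∑ k ∈ Finset.range L, h k := by
  obtain ⟨m, rfl⟩ : ∃ m, L = m + 1 := ⟨L-1, by omega⟩
  rw [Finset.sum_range_succ]
  have e2 : ∑ k ∈ Finset.range m, h ((k+1) % (m+1)) = ∑ k ∈ Finset.range m, h (k+1) :=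
    Finset.sum_congr rfl fun k hk => by
      rw [Nat.mod_eq_of_lt (by have := Finset.mem_range.1 hk; omega)]
  rw [e2, Nat.mod_self, ← Finset.sum_range_succ' h m]

private lemma mane_periodic_measure {X : Type*} [MetricSpace X] [MeasurableSpace X]
    [BorelSpace X] (T : X → Set X) (f : X → ℝ) (hfm : Continuous f)
    (L : ℕ) (hL : 1 ≤ L) (π : ℕ → X) (hπ : MChain T L π) (hper : π L = π 0) :
    ∃ μ : Measure X, IsProbabilityMeasure μ ∧
      (∀ A : Set X, MeasurableSet A → μ A ≤ μ {z : X | ∃ a ∈ A, a ∈ T z}) ∧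
      (∫ z, f z ∂μ) = (L : ℝ)⁻¹ * ∑ k ∈ Finset.range L, f (π (k+1)) := by
  classical
  set μ : Measure X := ((L : ℝ≥0∞))⁻¹ • ∑ k ∈ Finset.range L, Measure.dirac (π (k+1)) with hμ
  have hLne : (L : ℝ≥0∞) ≠ 0 := by
    simp only [ne_eq, Nat.cast_eq_zero]; omega
  have hLnetop : (L : ℝ≥0∞) ≠ ⊤ := ENNReal.natCast_ne_top L
  have happ : ∀ s : Set X, μ s = (L : ℝ≥0∞)⁻¹ * ∑ k ∈ Finset.range L, Measure.dirac (π (k+1)) s := by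
    intro s
    rw [hμ, Measure.smul_apply, Measure.coe_finset_sum, smul_eq_mul]
    simp
  have hprob : IsProbabilityMeasure μ := by
    constructor
    rw [happ]
    have : ∀ k ∈ Finset.range L, Measure.dirac (π (k+1)) (Set.univ : Set X) = 1 := by
      intro k _; simp
    rw [Finset.sum_congr rfl this]
    simp only [Finset.sum_const, Finset.card_range, nsmul_eq_mul, mul_one]
    exact ENNReal.inv_mul_cancel hLne hLnetop
  refine ⟨μ, hprob, ?_, ?_⟩
  · intro A hA
    set R : Set X := {z : X | ∃ a ∈ A, a ∈ T z} with hR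
    have hk' : ∀ k, k < L → Measure.dirac (π (k+1)) A ≤ Measure.dirac (π ((k+1) % L + 1)) R := by
      intro k hkL
      by_cases hmem : π (k+1) ∈ A
      · have hRmem : π ((k+1) % L + 1) ∈ R := by
          rcases Nat.lt_or_ge (k+1) L with hlt | hge
          · rw [Nat.mod_eq_of_lt hlt]
            exact ⟨π (k+1), hmem, hπ (k+1) hlt⟩
          · have hkL1 : k + 1 = L := by omega
            have h0 : (k+1) % L = 0 := by rw [hkL1]; exact Nat.mod_self L
            rw [h0]
            refine ⟨π (k+1), hmem, ?_⟩
            rw [hkL1, hper]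
            exact hπ 0 (by omega)
        rw [Measure.dirac_apply_of_mem hmem, Measure.dirac_apply_of_mem hRmem]
      · rw [Measure.dirac_apply, Set.indicator_of_notMem hmem]
        exact zero_le
    rw [happ, happ]
    refine mul_le_mul_right ?_ _
    calc ∑ k ∈ Finset.range L, Measure.dirac (π (k+1)) A
        ≤ ∑ k ∈ Finset.range L, Measure.dirac (π ((k+1) % L + 1)) R :=
          Finset.sum_le_sum fun k hk => hk' k (Finset.mem_range.1 hk)
      _ = ∑ k ∈ Finset.range L, Measure.dirac (π (k+1)) R :=
          mane_shift_sum L hL (fun j => Measure.dirac (π (j+1)) R)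
  · have hint : ∀ k ∈ Finset.range L, Integrable f (Measure.dirac (π (k+1))) := by
      intro k _
      refine ⟨hfm.aestronglyMeasurable, ?_⟩
      rw [HasFiniteIntegral, lintegral_dirac]
      exact ENNReal.coe_lt_top
    rw [hμ, integral_smul_measure, integral_finset_sum_measure hint]
    have : ∀ k ∈ Finset.range L, ∫ z, f z ∂(Measure.dirac (π (k+1))) = f (π (k+1)) := by
      intro k _; exact integral_dirac f _
    rw [Finset.sum_congr rfl this]
    rw [ENNReal.toReal_inv]
    simp [smul_eq_mul]

private lemma mane_bounded {X : Type*} [MetricSpace X] [CompactSpace X] (T : X → Set X)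
    {lam η δ₀ α K β G : ℝ} (hlam : 1 < lam) (hη : 0 < η) (hδ₀ : 0 < δ₀) (hδη : 2*δ₀ ≤ η)
    (hα : 0 < α) (hK : 0 < K) (hG : 0 < G)
    (hexp : ∀ x y : X, dist x y ≤ η → ∀ x' ∈ T x, ∀ y' ∈ T y, lam * dist x y ≤ dist x' y')
    (hB : ∀ x y y', y ∈ T x → dist y y' ≤ δ₀ → ∃ x', y' ∈ T x' ∧ lam * dist x x' ≤ dist y y')
    (f : X → ℝ) (hf : ∀ x y, |f x - f y| ≤ K * dist x y ^ α)
    (hfG : ∀ x, |f x - β| ≤ G)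
    (hper : ∀ L (π : ℕ → X), 1 ≤ L → MChain T L π → π L = π 0 →
      ∑ k ∈ Finset.range L, (f (π (k+1)) - β) ≤ 0) :
    ∃ Bd : ℝ, 0 ≤ Bd ∧
      ∀ n c, MChain T n c → ∑ k ∈ Finset.range n, (f (c (k+1)) - β) ≤ Bd := by
  classical
  have hlam0 : (0:ℝ) < lam := by linarith
  have hδ₁ : 0 < δ₀ * (lam - 1) / lam := div_pos (mul_pos hδ₀ (by linarith)) hlam0
  set δ₁ : ℝ := δ₀ * (lam - 1) / lam with hδ₁def
  -- finite cover
  have hcov : (Set.univ : Set X) ⊆ ⋃ u : X, ball u (δ₁/2) := by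
    intro x _
    exact Set.mem_iUnion.2 ⟨x, mem_ball_self (by linarith)⟩
  obtain ⟨t, ht⟩ := isCompact_univ.elim_finite_subcover
    (fun u : X => ball u (δ₁/2)) (fun u => isOpen_ball) hcov
  have hidx : ∀ x : X, ∃ u, u ∈ t ∧ x ∈ ball u (δ₁/2) := by
    intro x
    rcases Set.mem_iUnion₂.1 (ht (Set.mem_univ x)) with ⟨u, hu, hxu⟩
    exact ⟨u, hu, hxu⟩
  choose idx hidxt hidxd using hidx
  have hsame : ∀ x y : X, idx x = idx y → dist x y ≤ δ₁ := by
    intro x y hxy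
    have h1 : dist x (idx x) < δ₁/2 := mem_ball.1 (hidxd x)
    have h2 : dist y (idx y) < δ₁/2 := mem_ball.1 (hidxd y)
    rw [← hxy] at h2
    calc dist x y ≤ dist x (idx x) + dist (idx x) y := dist_triangle _ _ _
      _ ≤ δ₁ := by rw [dist_comm (idx x) y]; linarith
  -- constants
  set Q : ℝ := lam⁻¹ ^ α with hQdef
  have hinv0 : (0:ℝ) ≤ lam⁻¹ := inv_nonneg.2 hlam0.le
  have hinv1 : lam⁻¹ < 1 := inv_lt_one_of_one_lt₀ hlam
  have hQ0 : 0 ≤ Q := Real.rpow_nonneg hinv0 α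
  have hQ1 : Q < 1 := Real.rpow_lt_one hinv0 hinv1 hα
  set HC : ℝ := K * Q / (1 - Q) with hHCdef
  have hHC0 : 0 ≤ HC := by
    apply div_nonneg (mul_nonneg hK.le hQ0) (by linarith)
  set s₀ : ℝ := HC * δ₀ ^ α + 1 with hs₀def
  have hs₀0 : 0 ≤ s₀ := by
    have : 0 ≤ δ₀ ^ α := Real.rpow_nonneg hδ₀.le α
    nlinarith
  refine ⟨t.card * (G + s₀), by positivity, ?_⟩
  intro n c hc
  set g : X → ℝ := fun x => f x - β with hgdef
  set z : ℕ → X := fun r => c (n - r) with hzdef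
  have hmem : ∀ r < n, idx (z r) ∈ t := fun r _ => hidxt _
  have hseg : ∀ i L, 0 < L → i + L < n → idx (z i) = idx (z (i+L)) →
      ∑ r ∈ Finset.range L, g (z (i+r)) ≤ s₀ := by
    intro i L hL hiL hidxeq
    set σ : ℕ → X := fun k => c (n - i - L + k) with hσdef
    have hσch : MChain T L σ := by
      intro k hk
      exact hc (n - i - L + k) (by omega)
    have hσ0 : σ 0 = z (i + L) := by
      simp only [hσdef, hzdef, add_zero]
      congr 1
      omega
    have hσL : σ L = z i := by
      simp only [hσdef, hzdef]
      congr 1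
      omega
    have hgap : dist (σ 0) (σ L) ≤ δ₁ := by
      rw [hσ0, hσL]
      rw [dist_comm]
      exact hsame _ _ hidxeq
    obtain ⟨π, hπch, hπper, hπd⟩ :=
      mane_closing T hlam hη hδ₀ hδη hexp hB L hL σ hσch hgap
    have hval := mane_val_diff (β := β) hlam hα hK f hf L σ π δ₀ hδ₀.le hπd
    have hperL := hper L π hL hπch hπper
    have hsumeq : ∑ k ∈ Finset.range L, (f (σ (k+1)) - β)
        = ∑ r ∈ Finset.range L, g (z (i+r)) := by
      have hrefl := Finset.sum_range_reflect (fun r => g (z (i + r))) L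
      rw [← hrefl]
      refine Finset.sum_congr rfl fun k hk => ?_
      have hkL : k < L := Finset.mem_range.1 hk
      show f (c (n - i - L + (k+1))) - β = f (c (n - (i + (L - 1 - k)))) - β
      have he : n - i - L + (k+1) = n - (i + (L - 1 - k)) := by omega
      rw [he]
    rw [hsumeq] at hval
    calc ∑ r ∈ Finset.range L, g (z (i+r))
        ≤ ∑ k ∈ Finset.range L, (f (π (k+1)) - β) + K * Q / (1 - Q) * δ₀ ^ α := hval
      _ ≤ 0 + HC * δ₀ ^ α := by rw [hHCdef]; linarith
      _ ≤ s₀ := by rw [hs₀def]; linarith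
  have hpig := mane_pigeon g G s₀ hG.le hs₀0
    (fun x => by simpa [hgdef] using (abs_le.1 (hfG x)).2) idx n t z hmem hseg
  have hVeq : ∑ r ∈ Finset.range n, g (z r)
      = ∑ k ∈ Finset.range n, (f (c (k+1)) - β) := by
    have hrefl := Finset.sum_range_reflect (fun k => f (c (k+1)) - β) n
    rw [← hrefl]
    refine Finset.sum_congr rfl fun r hr => ?_
    have hrn : r < n := Finset.mem_range.1 hr
    show f (c (n - r)) - β = f (c (n - 1 - r + 1)) - β
    have he : n - r = n - 1 - r + 1 := by omega
    rw [he]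
  rw [← hVeq]
  exact hpig

theorem stmt18 {X : Type*} [MetricSpace X] [CompactSpace X]
    [MeasurableSpace X] [BorelSpace X] (T : X → Set X)
    (hT : IsClosed {p : X × X | p.2 ∈ T p.1})
    (hopen : ∀ A : Set X, IsOpen A → IsOpen {y : X | ∃ x ∈ A, y ∈ T x})
    (hexp : ∃ lam > (1 : ℝ), ∃ η > (0 : ℝ), ∀ x y : X, dist x y ≤ η →
      ∀ x' ∈ T x, ∀ y' ∈ T y, lam * dist x y ≤ dist x' y')
    (α : ℝ) (hα : 0 < α) (hα1 : α ≤ 1) (f : X → ℝ)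
    (hf : ∃ K > (0 : ℝ), ∀ x y : X, |f x - f y| ≤ K * dist x y ^ α) :
    ∃ v : X → ℝ, (∃ K > (0 : ℝ), ∀ x y : X, |v x - v y| ≤ K * dist x y ^ α) ∧
      ((∃ μ : Measure X, IsProbabilityMeasure μ ∧
          ∀ A : Set X, MeasurableSet A → μ A ≤ μ {z : X | ∃ a ∈ A, a ∈ T z}) →
        ∀ x y : X, y ∈ T x →
          f x + v x - v y ≤ sSup {r : ℝ | ∃ μ : Measure X, IsProbabilityMeasure μ ∧
            (∀ A : Set X, MeasurableSet A → μ A ≤ μ {z : X | ∃ a ∈ A, a ∈ T z}) ∧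
            (∫ z, f z ∂μ) = r}) := by
  classical
  obtain ⟨lam, hlam, η, hη, hexpand⟩ := hexp
  obtain ⟨K, hK, hfK⟩ := hf
  by_cases hM : (∃ μ : Measure X, IsProbabilityMeasure μ ∧
      ∀ A : Set X, MeasurableSet A → μ A ≤ μ {z : X | ∃ a ∈ A, a ∈ T z})
  swap
  · refine ⟨0, ⟨1, one_pos, fun x y => by simp; positivity⟩, fun h => absurd h hM⟩
  -- the critical value
  set β : ℝ := sSup {r : ℝ | ∃ μ : Measure X, IsProbabilityMeasure μ ∧
    (∀ A : Set X, MeasurableSet A → μ A ≤ μ {z : X | ∃ a ∈ A, a ∈ T z}) ∧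
    (∫ z, f z ∂μ) = r} with hβ
  -- X is nonempty
  have hXne : Nonempty X := by
    by_contra h
    rw [not_nonempty_iff] at h
    obtain ⟨μ₀, hμ₀p, _⟩ := hM
    have h1 : (Set.univ : Set X) = ∅ := Set.univ_eq_empty_iff.2 h
    have h2 := hμ₀p.measure_univ
    rw [h1] at h2
    simp at h2
  obtain ⟨x₀⟩ := hXne
  -- diameter bound and sup bound for f
  obtain ⟨Cd, hCd0, hCd⟩ : ∃ C, 0 ≤ C ∧ ∀ x y : X, dist x y ≤ C := by
    have hb := (isCompact_univ (X := X)).isBounded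
    rcases hb.subset_closedBall x₀ with ⟨r, hr⟩
    refine ⟨2 * max r 0, by positivity, fun x y => ?_⟩
    have hx : dist x x₀ ≤ r := by simpa using hr (Set.mem_univ x)
    have hy : dist y x₀ ≤ r := by simpa using hr (Set.mem_univ y)
    have := le_max_left r 0
    calc dist x y ≤ dist x x₀ + dist x₀ y := dist_triangle _ _ _
      _ ≤ 2 * max r 0 := by rw [dist_comm x₀ y]; linarith
  set Mf : ℝ := |f x₀| + K * Cd ^ α with hMfdef
  have hMf : ∀ x, ‖f x‖ ≤ Mf := by
    intro x
    have h1 : |f x - f x₀| ≤ K * dist x x₀ ^ α := hfK x x₀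
    have h2 : dist x x₀ ^ α ≤ Cd ^ α := Real.rpow_le_rpow dist_nonneg (hCd x x₀) hα.le
    have h3 : |f x| ≤ |f x₀| + |f x - f x₀| := by
      have := abs_add_le (f x₀) (f x - f x₀)
      simpa using this
    rw [Real.norm_eq_abs]
    nlinarith
  -- continuity of f
  have hfc : Continuous f := by
    rw [Metric.continuous_iff]
    intro b ε hε
    refine ⟨(ε / (2 * K)) ^ (1/α), by positivity, ?_⟩
    intro a ha
    have h1 : |f a - f b| ≤ K * dist a b ^ α := hfK a b
    have h2 : dist a b ^ α < ((ε / (2 * K)) ^ (1/α)) ^ α :=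
      Real.rpow_lt_rpow dist_nonneg ha hα
    have h3 : ((ε / (2 * K)) ^ (1/α) : ℝ) ^ α = ε / (2 * K) := by
      rw [← Real.rpow_mul (by positivity), one_div, inv_mul_cancel₀ hα.ne', Real.rpow_one]
    rw [h3] at h2
    rw [Real.dist_eq]
    have h4 : K * dist a b ^ α < K * (ε / (2 * K)) := by
      exact mul_lt_mul_of_pos_left h2 hK
    have h5 : K * (ε / (2 * K)) = ε / 2 := by field_simp
    linarith [h1, h4, h5.symm ▸ h4]
  -- the sup set is bounded above
  have hbdd : BddAbove {r : ℝ | ∃ μ : Measure X, IsProbabilityMeasure μ ∧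
      (∀ A : Set X, MeasurableSet A → μ A ≤ μ {z : X | ∃ a ∈ A, a ∈ T z}) ∧
      (∫ z, f z ∂μ) = r} := by
    refine ⟨Mf, ?_⟩
    rintro r ⟨μ, hμp, hμi, rfl⟩
    have hint : Integrable f μ :=
      ⟨hfc.aestronglyMeasurable,
        HasFiniteIntegral.of_bounded (C := Mf) (Filter.Eventually.of_forall hMf)⟩
    have h1 := norm_integral_le_of_norm_le_const (μ := μ) (Filter.Eventually.of_forall hMf)
    rw [probReal_univ] at h1
    simp only [ENNReal.toReal_one, mul_one] at h1
    calc ∫ z, f z ∂μ ≤ |∫ z, f z ∂μ| := le_abs_self _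
      _ ≤ Mf := by rwa [Real.norm_eq_abs] at h1
  -- branch constant
  obtain ⟨δr, hδr0, hBr⟩ := mane_branch T hT hopen hη hexpand
  set δ₀ : ℝ := min δr (η/2) with hδ₀def
  have hδ₀ : 0 < δ₀ := lt_min hδr0 (by linarith)
  have hδη : 2 * δ₀ ≤ η := by
    have := min_le_right δr (η/2)
    have h2 : δ₀ ≤ η / 2 := this
    linarith
  have hB : ∀ x y y', y ∈ T x → dist y y' ≤ δ₀ →
      ∃ x', y' ∈ T x' ∧ lam * dist x x' ≤ dist y y' := by
    intro x y y' hyx hd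
    obtain ⟨x', h1, _, h3⟩ := hBr x y y' hyx (hd.trans (min_le_left _ _))
    exact ⟨x', h1, h3⟩
  -- periodic chains have nonpositive value
  have hper : ∀ L (π : ℕ → X), 1 ≤ L → MChain T L π → π L = π 0 →
      ∑ k ∈ Finset.range L, (f (π (k+1)) - β) ≤ 0 := by
    intro L π hL hch hp
    by_contra hpos
    push_neg at hpos
    obtain ⟨μ, hμp, hμi, hμint⟩ := mane_periodic_measure T f hfc L hL π hch hp
    have hrle : ∫ z, f z ∂μ ≤ β := le_csSup hbdd ⟨μ, hμp, hμi, rfl⟩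
    rw [hμint] at hrle
    have hsum : ∑ k ∈ Finset.range L, f (π (k+1))
        = ∑ k ∈ Finset.range L, (f (π (k+1)) - β) + L * β := by
      rw [Finset.sum_sub_distrib]
      simp [Finset.card_range]
    have hL0 : (0:ℝ) < L := by exact_mod_cast hL
    rw [hsum] at hrle
    have h2 := mul_le_mul_of_nonneg_left hrle hL0.le
    rw [← mul_assoc, mul_inv_cancel₀ hL0.ne', one_mul] at h2
    linarith
  -- bound on f - β
  set G : ℝ := Mf + |β| + 1 with hGdef
  have hG : 0 < G := by
    have : 0 ≤ Mf := le_trans (norm_nonneg _) (hMf x₀)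
    have := abs_nonneg β
    linarith
  have hfG : ∀ x, |f x - β| ≤ G := by
    intro x
    have h1 : |f x - β| ≤ |f x| + |β| := abs_sub _ _
    have h2 : |f x| ≤ Mf := by rw [← Real.norm_eq_abs]; exact hMf x
    linarith
  -- global bound on chain values
  obtain ⟨Bd, hBd0, hBd⟩ := mane_bounded T hlam hη hδ₀ hδη hα hK hG hexpand hB f hfK hfG hper
  -- definition of v
  set Sv : X → Set ℝ := fun y => {s | ∃ n c, c 0 = y ∧ MChain T n c ∧
    ∑ k ∈ Finset.range n, (f (c (k+1)) - β) = s} with hSvdef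
  have hSvne : ∀ y, (0:ℝ) ∈ Sv y := by
    intro y
    exact ⟨0, fun _ => y, rfl, fun k hk => absurd hk (Nat.not_lt_zero k), by simp⟩
  have hSvbdd : ∀ y, BddAbove (Sv y) := by
    intro y
    refine ⟨Bd, ?_⟩
    rintro s ⟨n, c, hc0, hch, rfl⟩
    exact hBd n c hch
  set v : X → ℝ := fun y => sSup (Sv y) with hvdef
  have hv0 : ∀ y, 0 ≤ v y := fun y => le_csSup (hSvbdd y) (hSvne y)
  have hvB : ∀ y, v y ≤ Bd := by
    intro y
    apply csSup_le ⟨0, hSvne y⟩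
    rintro s ⟨n, c, hc0, hch, rfl⟩
    exact hBd n c hch
  -- local Hölder estimate
  set HC : ℝ := K * (lam⁻¹ ^ α) / (1 - lam⁻¹ ^ α) with hHCdef
  have hlam0 : (0:ℝ) < lam := by linarith
  have hinv0 : (0:ℝ) ≤ lam⁻¹ := inv_nonneg.2 hlam0.le
  have hinv1 : lam⁻¹ < 1 := inv_lt_one_of_one_lt₀ hlam
  have hQ0 : (0:ℝ) ≤ lam⁻¹ ^ α := Real.rpow_nonneg hinv0 α
  have hQ1 : lam⁻¹ ^ α < 1 := Real.rpow_lt_one hinv0 hinv1 hα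
  have hHC0 : 0 ≤ HC := div_nonneg (mul_nonneg hK.le hQ0) (by linarith)
  have hloc : ∀ y y', dist y y' ≤ δ₀ → v y ≤ v y' + HC * dist y y' ^ α := by
    intro y y' hd
    apply csSup_le ⟨0, hSvne y⟩
    rintro s ⟨n, c, hc0, hch, rfl⟩
    obtain ⟨c', hc'0, hc'ch, hc'd⟩ :=
      mane_transport T hlam hδ₀ hB n c hch y' (by rw [hc0]; exact hd)
    rw [hc0] at hc'd
    have hval := mane_val_diff (β := β) hlam hα hK f hfK n c c' (dist y y') dist_nonneg hc'd
    have hmem : (∑ k ∈ Finset.range n, (f (c' (k+1)) - β)) ∈ Sv y' :=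
      ⟨n, c', hc'0, hc'ch, rfl⟩
    have hle : (∑ k ∈ Finset.range n, (f (c' (k+1)) - β)) ≤ v y' :=
      le_csSup (hSvbdd y') hmem
    calc ∑ k ∈ Finset.range n, (f (c (k+1)) - β)
        ≤ ∑ k ∈ Finset.range n, (f (c' (k+1)) - β) + K * lam⁻¹ ^ α / (1 - lam⁻¹ ^ α) * dist y y' ^ α := hval
      _ ≤ v y' + HC * dist y y' ^ α := by rw [hHCdef]; linarith
  -- global Hölder constant
  have hδ₀α : (0:ℝ) < δ₀ ^ α := Real.rpow_pos_of_pos hδ₀ α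
  have h8 : 0 ≤ Bd / δ₀ ^ α := div_nonneg hBd0 hδ₀α.le
  have hKvpos : 0 < HC + Bd / δ₀ ^ α + 1 := by linarith
  refine ⟨v, ⟨HC + Bd / δ₀ ^ α + 1, hKvpos, ?_⟩, ?_⟩
  · intro x y
    have hdα : (0:ℝ) ≤ dist x y ^ α := Real.rpow_nonneg dist_nonneg α
    have hexp1 : (HC + Bd / δ₀ ^ α + 1) * dist x y ^ α
        = HC * dist x y ^ α + Bd / δ₀ ^ α * dist x y ^ α + dist x y ^ α := by ring
    have h9 : 0 ≤ Bd / δ₀ ^ α * dist x y ^ α := mul_nonneg h8 hdα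
    have h10 : 0 ≤ HC * dist x y ^ α := mul_nonneg hHC0 hdα
    rcases le_or_gt (dist x y) δ₀ with hd | hd
    · have h1 := hloc x y hd
      have h2 := hloc y x (by rwa [dist_comm])
      rw [dist_comm y x] at h2
      rw [abs_le]
      constructor
      · linarith
      · linarith
    · have h3 : δ₀ ^ α ≤ dist x y ^ α := Real.rpow_le_rpow hδ₀.le hd.le hα.le
      have h5 : Bd ≤ Bd / δ₀ ^ α * dist x y ^ α := by
        rw [div_mul_eq_mul_div, le_div_iff₀ hδ₀α]
        exact mul_le_mul_of_nonneg_left h3 hBd0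
      rw [abs_le]
      have h11 := hv0 x
      have h12 := hvB y
      have h13 := hv0 y
      have h14 := hvB x
      constructor
      · linarith
      · linarith
  · intro _ x y hxy
    have hkey : v x ≤ v y - f x + β := by
      apply csSup_le ⟨0, hSvne x⟩
      rintro s ⟨n, c, hc0, hch, rfl⟩
      set c' : ℕ → X := fun k => Nat.casesOn k y (fun m => c m) with hc'def
      have hch' : MChain T (n+1) c' := by
        intro k hk
        cases k with
        | zero =>
            show y ∈ T (c 0)
            rw [hc0]
            exact hxy
        | succ m =>
            have hm : m < n := by omega
            exact hch m hm
      have hsum : ∑ k ∈ Finset.range (n+1), (f (c' (k+1)) - β)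
          = ∑ k ∈ Finset.range n, (f (c (k+1)) - β) + (f (c 0) - β) := by
        rw [Finset.sum_range_succ' (fun k => f (c' (k+1)) - β) n]
      have hmem : (∑ k ∈ Finset.range (n+1), (f (c' (k+1)) - β)) ∈ Sv y :=
        ⟨n+1, c', rfl, hch', rfl⟩
      have hle := le_csSup (hSvbdd y) hmem
      rw [hsum, hc0] at hle
      linarith
    linarith
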